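/- arXiv:1103.6250 — 4 statements merged into one kernel-verified Lean document; each statement's English description precedes it below -/
import Mathlib

section
/- Let (Z, ω) be a 2d-dimensional symplectic vector space, let V ⊆ Z be a subspace with dim V = d, and let W ⊆ Z be a Lagrangian subspace. Then V ∩ W = {0} if and only if V^ω ∩ W = {0}. (This is the pointwise linear-algebraic content of the theorem that, for a Lagrangian submanifold Σ of a symplectic groupoid, the restricted source map is a local diffeomorphism if and only if the restricted target map is: V is the tangent space to the source fiber, V^ω the tangent space to the target fiber, and W the tangent space to Σ.) -/
open Module

/-- The symplectic orthogonal complement of a subspace `U` with respect to a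
bilinear form `ω`: all `z` with `ω u z = 0` for every `u ∈ U`. -/
def sympCompl {Z : Type*} [AddCommGroup Z] [Module ℝ Z]
    (ω : Z →ₗ[ℝ] Z →ₗ[ℝ] ℝ) (U : Submodule ℝ Z) : Submodule ℝ Z where
  carrier := {z | ∀ u ∈ U, ω u z = 0}
  add_mem' := by
    intro a b ha hb u hu
    simp [map_add, ha u hu, hb u hu]
  zero_mem' := by
    intro u hu
    simp
  smul_mem' := by
    intro c a ha u hu
    simp [ha u hu]


private lemma sympCompl_eq_orthogonal {Z : Type*} [AddCommGroup Z] [Module ℝ Z]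
    (ω : Z →ₗ[ℝ] Z →ₗ[ℝ] ℝ) (U : Submodule ℝ Z) :
    sympCompl ω U = LinearMap.BilinForm.orthogonal ω U := by
  ext z
  simp [sympCompl, LinearMap.BilinForm.mem_orthogonal_iff, LinearMap.BilinForm.IsOrtho]

private lemma orthogonal_sup' {Z : Type*} [AddCommGroup Z] [Module ℝ Z]
    (ω : LinearMap.BilinForm ℝ Z) (A B : Submodule ℝ Z) :
    LinearMap.BilinForm.orthogonal ω (A ⊔ B) = LinearMap.BilinForm.orthogonal ω A ⊓ LinearMap.BilinForm.orthogonal ω B := by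
  ext z
  simp only [LinearMap.BilinForm.mem_orthogonal_iff, Submodule.mem_inf,
    LinearMap.BilinForm.IsOrtho]
  constructor
  · intro h
    exact ⟨fun n hn => h n (Submodule.mem_sup_left hn),
      fun n hn => h n (Submodule.mem_sup_right hn)⟩
  · rintro ⟨h1, h2⟩ n hn
    obtain ⟨a, ha, b, hb, rfl⟩ := Submodule.mem_sup.mp hn
    simp [h1 a ha, h2 b hb]

private lemma inf_bot_iff_sup_top {Z : Type*} [AddCommGroup Z] [Module ℝ Z]
    [FiniteDimensional ℝ Z] (A B : Submodule ℝ Z)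
    (h : finrank ℝ A + finrank ℝ B = finrank ℝ Z) :
    A ⊓ B = ⊥ ↔ A ⊔ B = ⊤ := by
  constructor
  · intro hinf
    apply Submodule.eq_top_of_finrank_eq
    have := Submodule.finrank_sup_add_finrank_inf_eq A B
    rw [hinf] at this
    simp only [finrank_bot, add_zero] at this
    omega
  · intro hsup
    have := Submodule.finrank_sup_add_finrank_inf_eq A B
    rw [hsup, finrank_top] at this
    have h0 : finrank ℝ (A ⊓ B : Submodule ℝ Z) = 0 := by omega
    exact Submodule.finrank_eq_zero.mp h0

/-- In a `2d`-dimensional symplectic vector space, if `dim V = d` and `W` is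
Lagrangian, then `V ∩ W = 0` iff `V^ω ∩ W = 0`. -/
theorem inf_eq_bot_iff_sympCompl_inf_eq_bot
    {Z : Type*} [AddCommGroup Z] [Module ℝ Z] [FiniteDimensional ℝ Z]
    (d : ℕ) (ω : Z →ₗ[ℝ] Z →ₗ[ℝ] ℝ)
    (halt : ∀ z, ω z z = 0)
    (hnondeg : ∀ z, (∀ z', ω z z' = 0) → z = 0)
    (hdim : finrank ℝ Z = 2 * d)
    (V W : Submodule ℝ Z)
    (hV : finrank ℝ V = d)
    (hW : sympCompl ω W = W) :
    V ⊓ W = ⊥ ↔ sympCompl ω V ⊓ W = ⊥ := by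
  have hAlt : LinearMap.IsAlt ω := halt
  have hRefl : LinearMap.IsRefl ω := hAlt.isRefl
  have hNd : LinearMap.BilinForm.Nondegenerate ω := hRefl.nondegenerate_iff_separatingLeft.mpr fun m hm => hnondeg m hm
  rw [sympCompl_eq_orthogonal] at hW ⊢
  have hWd : finrank ℝ W = d := by
    have := LinearMap.BilinForm.finrank_orthogonal (B := ω) hNd W
    rw [hW, hdim] at this
    have hle : finrank ℝ W ≤ 2 * d := hdim ▸ Submodule.finrank_le W
    omega
  have hVo : finrank ℝ (LinearMap.BilinForm.orthogonal ω V) = d := by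
    rw [LinearMap.BilinForm.finrank_orthogonal (B := ω) hNd V, hdim, hV]
    omega
  rw [inf_bot_iff_sup_top V W (by omega), inf_bot_iff_sup_top _ W (by omega)]
  constructor
  · intro h
    have : LinearMap.BilinForm.orthogonal ω (V ⊔ W) = ⊥ := by
      rw [h, LinearMap.BilinForm.orthogonal_top_eq_bot (B := ω) hNd]
    rw [orthogonal_sup', hW] at this
    rw [inf_bot_iff_sup_top _ W (by omega)] at this
    exact this
  · intro h
    have : LinearMap.BilinForm.orthogonal ω (LinearMap.BilinForm.orthogonal ω V ⊔ W) = ⊥ := by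
      rw [h, LinearMap.BilinForm.orthogonal_top_eq_bot (B := ω) hNd]
    rw [orthogonal_sup', hW, LinearMap.BilinForm.orthogonal_orthogonal (B := ω) hNd hRefl] at this
    rw [inf_bot_iff_sup_top V W (by omega)] at this
    exact this
end

section
/- Let E be a real normed vector space, let L : E × E → ℝ be differentiable, let n ≥ 2, and fix endpoints q₀, qₙ ∈ E. Define the discrete action sum S : E^{n−1} → ℝ by S(q₁, …, q_{n−1}) = Σ_{k=1}^{n} L(q_{k−1}, q_k). Then (q₁, …, q_{n−1}) is a critical point of S (i.e., the Fréchet derivative of S at (q₁, …, q_{n−1}) is zero) if and only if the discrete Euler–Lagrange equations hold: ∂₀L(q_k, q_{k+1}) + ∂₁L(q_{k−1}, q_k) = 0 for every k = 1, …, n−1. -/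
/-- The partial derivative of `L : E × E → ℝ` with respect to the first slot,
as a continuous linear functional: `v ↦ DL(a, b)(v, 0)`. -/
noncomputable def partial0 {E : Type*} [NormedAddCommGroup E] [NormedSpace ℝ E]
    (L : E × E → ℝ) (a b : E) : E →L[ℝ] ℝ :=
  (fderiv ℝ L (a, b)).comp (ContinuousLinearMap.inl ℝ E E)

/-- The partial derivative of `L : E × E → ℝ` with respect to the second slot,
as a continuous linear functional: `v ↦ DL(a, b)(0, v)`. -/
noncomputable def partial1 {E : Type*} [NormedAddCommGroup E] [NormedSpace ℝ E]
    (L : E × E → ℝ) (a b : E) : E →L[ℝ] ℝ :=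
  (fderiv ℝ L (a, b)).comp (ContinuousLinearMap.inr ℝ E E)

/-- The discrete trajectory `q₀, q₁, …, qₙ` with fixed endpoints `q₀ = q0`,
`qₙ = qn` and interior points `x : Fin (n-1) → E` (so `q_k = x (k-1)` for
`0 < k < n`). -/
def discreteTraj {E : Type*} [NormedAddCommGroup E] [NormedSpace ℝ E]
    (n : ℕ) (q0 qn : E) (x : Fin (n - 1) → E) : ℕ → E :=
  fun k => if h : 0 < k ∧ k < n then x ⟨k - 1, by omega⟩
    else if k = 0 then q0 else qn

/-- Helper: a sum that is supported on two distinct elements. -/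
lemma sum_eq_add_of_support {M : Type*} [AddCommMonoid M] {s : Finset ℕ}
    {f : ℕ → M} {i j : ℕ} (hi : i ∈ s) (hj : j ∈ s) (hij : i ≠ j)
    (h : ∀ c ∈ s, c ≠ i → c ≠ j → f c = 0) :
    ∑ c ∈ s, f c = f i + f j := by
  classical
  rw [← Finset.sum_subset
    (Finset.insert_subset hi (Finset.singleton_subset_iff.mpr hj))
    (fun c hc hc' => h c hc (fun h1 => hc' (by simp [h1]))
      (fun h2 => hc' (by simp [h2])))]
  exact Finset.sum_pair hij

/-- The linear part of `y ↦ discreteTraj n q0 qn y k`. -/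
noncomputable def trajCLM (E : Type*) [NormedAddCommGroup E] [NormedSpace ℝ E]
    (n k : ℕ) : ((Fin (n - 1) → E) →L[ℝ] E) :=
  if h : 0 < k ∧ k < n then
    ContinuousLinearMap.proj (⟨k - 1, by omega⟩ : Fin (n - 1)) else 0

lemma discreteTraj_eq_clm {E : Type*} [NormedAddCommGroup E] [NormedSpace ℝ E]
    (n : ℕ) (q0 qn : E) (y : Fin (n - 1) → E) (k : ℕ) :
    discreteTraj n q0 qn y k = trajCLM E n k y + discreteTraj n q0 qn 0 k := by
  unfold discreteTraj trajCLM
  by_cases h : 0 < k ∧ k < n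
  · rw [dif_pos h, dif_pos h, dif_pos h]
    simp
  · rw [dif_neg h, dif_neg h]
    simp [h]

lemma trajCLM_single {E : Type*} [NormedAddCommGroup E] [NormedSpace ℝ E]
    (n k : ℕ) (j : Fin (n - 1)) (v : E) :
    trajCLM E n k (Pi.single j v) =
      if 0 < k ∧ k < n ∧ k - 1 = (j : ℕ) then v else 0 := by
  unfold trajCLM
  by_cases h : 0 < k ∧ k < n
  · rw [dif_pos h, ContinuousLinearMap.proj_apply]
    by_cases h3 : k - 1 = (j : ℕ)
    · rw [if_pos (show 0 < k ∧ k < n ∧ k - 1 = (j : ℕ) from ⟨h.1, h.2, h3⟩)]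
      have hfin : (⟨k - 1, by omega⟩ : Fin (n - 1)) = j := Fin.ext h3
      rw [hfin, Pi.single_eq_same]
    · rw [if_neg (show ¬(0 < k ∧ k < n ∧ k - 1 = (j : ℕ)) from fun h' => h3 h'.2.2)]
      have hne : (⟨k - 1, by omega⟩ : Fin (n - 1)) ≠ j := Fin.ne_of_val_ne h3
      exact Pi.single_eq_of_ne (M := fun _ => E) hne v
  · rw [dif_neg h, ContinuousLinearMap.zero_apply,
      if_neg (show ¬(0 < k ∧ k < n ∧ k - 1 = (j : ℕ)) from fun h' => h ⟨h'.1, h'.2.1⟩)]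

/-- A point `(q₁, …, q_{n−1})` is a critical point of the discrete action sum
`S(q₁, …, q_{n−1}) = Σ_{k=1}^{n} L(q_{k−1}, q_k)` (with endpoints `q₀, qₙ`
fixed) iff the discrete Euler–Lagrange equations
`∂₀L(q_k, q_{k+1}) + ∂₁L(q_{k−1}, q_k) = 0` hold for `k = 1, …, n−1`. -/
theorem discrete_action_critical_iff_discreteEL
    {E : Type*} [NormedAddCommGroup E] [NormedSpace ℝ E]
    (L : E × E → ℝ) (hL : Differentiable ℝ L)
    (n : ℕ) (hn : 2 ≤ n) (q0 qn : E) (x : Fin (n - 1) → E) :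
    fderiv ℝ
        (fun y : Fin (n - 1) → E =>
          ∑ k ∈ Finset.range n,
            L (discreteTraj n q0 qn y k, discreteTraj n q0 qn y (k + 1))) x = 0
      ↔ ∀ k : ℕ, 1 ≤ k → k ≤ n - 1 →
          partial0 L (discreteTraj n q0 qn x k) (discreteTraj n q0 qn x (k + 1))
            + partial1 L (discreteTraj n q0 qn x (k - 1)) (discreteTraj n q0 qn x k)
            = 0 := by
  classical
  set T := discreteTraj n q0 qn x with hT
  set D : ((Fin (n - 1) → E) →L[ℝ] ℝ) :=
    ∑ k ∈ Finset.range n,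
      (fderiv ℝ L (T k, T (k + 1))).comp
        ((trajCLM E n k).prod (trajCLM E n (k + 1))) with hD
  have hderiv : HasFDerivAt
      (fun y : Fin (n - 1) → E =>
        ∑ k ∈ Finset.range n,
          L (discreteTraj n q0 qn y k, discreteTraj n q0 qn y (k + 1))) D x := by
    rw [hD]
    apply HasFDerivAt.fun_sum
    intro k _
    have hA : HasFDerivAt
        (fun y : Fin (n - 1) → E =>
          ((trajCLM E n k).prod (trajCLM E n (k + 1))) y
            + (discreteTraj n q0 qn 0 k, discreteTraj n q0 qn 0 (k + 1)))
        ((trajCLM E n k).prod (trajCLM E n (k + 1))) x :=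
      (((trajCLM E n k).prod (trajCLM E n (k + 1))).hasFDerivAt).add_const _
    have key : (fun y : Fin (n - 1) → E =>
        L (discreteTraj n q0 qn y k, discreteTraj n q0 qn y (k + 1))) =
        (fun y => L (((trajCLM E n k).prod (trajCLM E n (k + 1))) y
            + (discreteTraj n q0 qn 0 k, discreteTraj n q0 qn 0 (k + 1)))) := by
      funext y
      simp [ContinuousLinearMap.prod_apply, Prod.mk_add_mk, ← discreteTraj_eq_clm]
    rw [key]
    have hpt : ((trajCLM E n k).prod (trajCLM E n (k + 1))) x
        + (discreteTraj n q0 qn 0 k, discreteTraj n q0 qn 0 (k + 1))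
        = (T k, T (k + 1)) := by
      simp [hT, ContinuousLinearMap.prod_apply, Prod.mk_add_mk, ← discreteTraj_eq_clm]
    have := (hL _).hasFDerivAt.comp x hA
    rwa [hpt] at this
  rw [hderiv.fderiv]
  have hDsingle : ∀ (j : Fin (n - 1)) (v : E),
      D (Pi.single j v) =
        (partial0 L (T ((j : ℕ) + 1)) (T ((j : ℕ) + 2))
          + partial1 L (T (j : ℕ)) (T ((j : ℕ) + 1))) v := by
    intro j v
    have hjn : (j : ℕ) + 1 < n := by have := j.2; omega
    rw [hD, ContinuousLinearMap.sum_apply]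
    rw [sum_eq_add_of_support (i := (j : ℕ)) (j := (j : ℕ) + 1)
      (Finset.mem_range.mpr (by omega)) (Finset.mem_range.mpr (by omega)) (by omega)
      ?_]
    · simp only [ContinuousLinearMap.comp_apply, ContinuousLinearMap.prod_apply,
        trajCLM_single]
      have e1 : ¬(0 < (j : ℕ) ∧ (j : ℕ) < n ∧ (j : ℕ) - 1 = (j : ℕ)) := by omega
      have e2 : (0 < (j : ℕ) + 1 ∧ (j : ℕ) + 1 < n ∧ (j : ℕ) + 1 - 1 = (j : ℕ)) := by
        refine ⟨by omega, hjn, by omega⟩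
      have e3 : ¬(0 < (j : ℕ) + 1 + 1 ∧ (j : ℕ) + 1 + 1 < n ∧
          (j : ℕ) + 1 + 1 - 1 = (j : ℕ)) := by omega
      rw [if_neg e1, if_pos e2, if_neg e3]
      have h01 : ((0 : E), v) = (ContinuousLinearMap.inr ℝ E E) v := rfl
      have h10 : (v, (0 : E)) = (ContinuousLinearMap.inl ℝ E E) v := rfl
      rw [h01, h10, add_comm]
      simp only [partial0, partial1, ContinuousLinearMap.add_apply,
        ContinuousLinearMap.comp_apply]
    · intro c _ hc1 hc2
      simp only [ContinuousLinearMap.comp_apply, ContinuousLinearMap.prod_apply,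
        trajCLM_single]
      rw [if_neg (by omega), if_neg (by omega)]
      simp [Prod.mk_zero_zero]
  constructor
  · intro h k hk1 hk2
    set j : Fin (n - 1) := ⟨k - 1, by omega⟩ with hj
    ext v
    have key := hDsingle j v
    rw [h] at key
    have e1 : (j : ℕ) + 1 = k := by simp [hj]; omega
    have e2 : (j : ℕ) + 2 = k + 1 := by simp [hj]; omega
    have e0 : (j : ℕ) = k - 1 := rfl
    rw [e1, e2, e0] at key
    simpa using key.symm
  · intro h
    ext y
    have hy : y = ∑ j : Fin (n - 1), Pi.single j (y j) :=
      (Finset.univ_sum_single y).symm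
    rw [ContinuousLinearMap.zero_apply, hy, map_sum]
    apply Finset.sum_eq_zero
    intro j _
    rw [hDsingle j (y j)]
    have key := h ((j : ℕ) + 1) (by omega) (by have := j.2; omega)
    rw [Nat.add_sub_cancel] at key
    have e2 : (j : ℕ) + 2 = (j : ℕ) + 1 + 1 := by omega
    rw [e2, key]
    simp
end

section
/- Let E be a finite-dimensional real normed vector space and let L : E × E → ℝ be twice continuously differentiable in a neighborhood of a point (a, b) ∈ E × E. Define the discrete Legendre transformations F⁻L, F⁺L : E × E → E × E* by F⁻L(q₀, q₁) = (q₀, −∂₀L(q₀, q₁)) and F⁺L(q₀, q₁) = (q₁, ∂₁L(q₀, q₁)). Then the Fréchet derivative of F⁻L at (a, b) is a linear isomorphism if and only if the Fréchet derivative of F⁺L at (a, b) is a linear isomorphism (hence F⁻L is a local diffeomorphism at (a, b) if and only if F⁺L is). -/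
/-- The discrete Legendre transformation
`F⁻L(q₀, q₁) = (q₀, −∂₀L(q₀, q₁)) ∈ E × E*`. -/
noncomputable def legendreMinus {E : Type*} [NormedAddCommGroup E] [NormedSpace ℝ E]
    (L : E × E → ℝ) : E × E → E × (E →L[ℝ] ℝ) :=
  fun p => (p.1, -partial0 L p.1 p.2)

/-- The discrete Legendre transformation
`F⁺L(q₀, q₁) = (q₁, ∂₁L(q₀, q₁)) ∈ E × E*`. -/
noncomputable def legendrePlus {E : Type*} [NormedAddCommGroup E] [NormedSpace ℝ E]
    (L : E × E → ℝ) : E × E → E × (E →L[ℝ] ℝ) :=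
  fun p => (p.2, partial1 L p.1 p.2)

open Function ContinuousLinearMap

lemma block_bij {G E F : Type*} [AddCommGroup G] [AddCommGroup E] [AddCommGroup F]
    [Module ℝ G] [Module ℝ E] [Module ℝ F] (φ : G →ₗ[ℝ] F) (ψ : E →ₗ[ℝ] F) :
    Function.Bijective (fun p : G × E => (p.1, φ p.1 + ψ p.2)) ↔ Function.Bijective ψ := by
  constructor
  · rintro ⟨hinj, hsurj⟩
    constructor
    · intro v v' h
      have := hinj (a₁ := (0, v)) (a₂ := (0, v')) (by simp [h])
      simpa using this
    · intro y
      obtain ⟨⟨u, v⟩, huv⟩ := hsurj (0, y)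
      simp only [Prod.mk.injEq] at huv
      obtain ⟨rfl, h2⟩ := huv
      exact ⟨v, by simpa using h2⟩
  · rintro ⟨hinj, hsurj⟩
    constructor
    · rintro ⟨u, v⟩ ⟨u', v'⟩ h
      simp only [Prod.mk.injEq] at h
      obtain ⟨rfl, h2⟩ := h
      have : ψ v = ψ v' := add_left_cancel h2
      exact Prod.ext rfl (hinj this)
    · rintro ⟨x, y⟩
      obtain ⟨v, hv⟩ := hsurj (y - φ x)
      exact ⟨(x, v), by simp [hv]⟩

set_option maxHeartbeats 1000000 in
/-- For a `C²` discrete Lagrangian `L` near `(a, b)`, the Fréchet derivative of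
`F⁻L` at `(a, b)` is a linear isomorphism iff that of `F⁺L` is; hence `F⁻L` is
a local diffeomorphism at `(a, b)` iff `F⁺L` is. -/
theorem legendreMinus_fderiv_bijective_iff_legendrePlus
    {E : Type*} [NormedAddCommGroup E] [NormedSpace ℝ E] [FiniteDimensional ℝ E]
    (L : E × E → ℝ) (a b : E) (hL : ContDiffAt ℝ 2 L (a, b)) :
    Function.Bijective ⇑(fderiv ℝ (legendreMinus L) (a, b))
      ↔ Function.Bijective ⇑(fderiv ℝ (legendrePlus L) (a, b)) := by
  classical
  set f : E × E → (E × E →L[ℝ] ℝ) := fderiv ℝ L with hf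
  set D : (E × E) →L[ℝ] (E × E →L[ℝ] ℝ) := fderiv ℝ f (a, b) with hD
  have hdf : DifferentiableAt ℝ f (a, b) := by
    have h1 : ContDiffAt ℝ 1 f (a, b) := hL.fderiv_right (by norm_num)
    exact h1.differentiableAt one_ne_zero
  have hDf : HasFDerivAt f D (a, b) := hdf.hasFDerivAt
  have hsymm : ∀ p q : E × E, D p q = D q p := hL.isSymmSndFDerivAt (by simp)
  -- the two "truncation" operators
  set T : (E × E →L[ℝ] ℝ) →L[ℝ] (E →L[ℝ] ℝ) :=
    (ContinuousLinearMap.compL ℝ E (E × E) ℝ).flip (ContinuousLinearMap.inl ℝ E E) with hT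
  set T' : (E × E →L[ℝ] ℝ) →L[ℝ] (E →L[ℝ] ℝ) :=
    (ContinuousLinearMap.compL ℝ E (E × E) ℝ).flip (ContinuousLinearMap.inr ℝ E E) with hT'
  have hTapp : ∀ (g : E × E →L[ℝ] ℝ) (w : E), T g w = g (w, 0) := fun g w => rfl
  have hT'app : ∀ (g : E × E →L[ℝ] ℝ) (w : E), T' g w = g (0, w) := fun g w => rfl
  -- derivatives of the Legendre transforms
  have hMinusEq : legendreMinus L = fun p : E × E => (p.1, -(T (f p))) := by
    funext p
    simp only [legendreMinus, partial0, hT, ContinuousLinearMap.flip_apply,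
      ContinuousLinearMap.compL_apply, hf]
  have hPlusEq : legendrePlus L = fun p : E × E => (p.2, T' (f p)) := by
    funext p
    simp only [legendrePlus, partial1, hT', ContinuousLinearMap.flip_apply,
      ContinuousLinearMap.compL_apply, hf]
  have hMderiv : HasFDerivAt (legendreMinus L)
      ((ContinuousLinearMap.fst ℝ E E).prod (-(T.comp D))) (a, b) := by
    rw [hMinusEq]
    exact (hasFDerivAt_fst (p := (a, b))).prodMk ((T.hasFDerivAt.comp (a, b) hDf).neg)
  have hPderiv : HasFDerivAt (legendrePlus L)
      ((ContinuousLinearMap.snd ℝ E E).prod (T'.comp D)) (a, b) := by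
    rw [hPlusEq]
    exact (hasFDerivAt_snd (p := (a, b))).prodMk (T'.hasFDerivAt.comp (a, b) hDf)
  rw [hMderiv.fderiv, hPderiv.fderiv]
  -- linear-map components
  set φm : E →ₗ[ℝ] (E →L[ℝ] ℝ) := (((-(T.comp D)).comp (ContinuousLinearMap.inl ℝ E E)) : E →L[ℝ] E →L[ℝ] ℝ).toLinearMap
  set ψm : E →ₗ[ℝ] (E →L[ℝ] ℝ) := (((-(T.comp D)).comp (ContinuousLinearMap.inr ℝ E E)) : E →L[ℝ] E →L[ℝ] ℝ).toLinearMap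
  set φp : E →ₗ[ℝ] (E →L[ℝ] ℝ) := (((T'.comp D).comp (ContinuousLinearMap.inl ℝ E E)) : E →L[ℝ] E →L[ℝ] ℝ).toLinearMap
  set ψp : E →ₗ[ℝ] (E →L[ℝ] ℝ) := (((T'.comp D).comp (ContinuousLinearMap.inr ℝ E E)) : E →L[ℝ] E →L[ℝ] ℝ).toLinearMap
  have hsplit : ∀ p : E × E, D p = D (p.1, 0) + D (0, p.2) := by
    intro p
    rw [← map_add]
    congr 1
    simp
  have hMcoe : ⇑((ContinuousLinearMap.fst ℝ E E).prod (-(T.comp D)))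
      = fun p : E × E => (p.1, φm p.1 + ψm p.2) := by
    funext p
    simp only [ContinuousLinearMap.prod_apply, ContinuousLinearMap.coe_fst',
      ContinuousLinearMap.neg_apply, ContinuousLinearMap.coe_comp', Function.comp_apply]
    refine Prod.ext rfl ?_
    simp only [φm, ψm, ContinuousLinearMap.coe_coe, ContinuousLinearMap.comp_apply,
      ContinuousLinearMap.neg_apply, ContinuousLinearMap.inl_apply,
      ContinuousLinearMap.inr_apply]
    rw [hsplit p]
    simp [add_comm]
  have hPcoe : ⇑((ContinuousLinearMap.snd ℝ E E).prod (T'.comp D))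
      = (fun p : E × E => (p.1, ψp p.1 + φp p.2)) ∘ (Prod.swap) := by
    funext p
    simp only [Function.comp_apply, Prod.swap, ContinuousLinearMap.prod_apply,
      ContinuousLinearMap.coe_snd', ContinuousLinearMap.coe_comp', Function.comp_apply]
    refine Prod.ext rfl ?_
    simp only [φp, ψp, ContinuousLinearMap.coe_coe, ContinuousLinearMap.comp_apply,
      ContinuousLinearMap.inl_apply, ContinuousLinearMap.inr_apply]
    rw [hsplit p]
    simp [add_comm]
  rw [hMcoe, hPcoe]
  have hswap : (Prod.swap : E × E → E × E) = ⇑(Equiv.prodComm E E) := rfl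
  rw [hswap, EquivLike.bijective_comp]
  rw [block_bij φm ψm, block_bij ψp φp]
  -- Now: Bijective ψm ↔ Bijective φp
  -- remove the negation in ψm
  have hψm : ⇑ψm = (Equiv.neg (E →L[ℝ] ℝ)) ∘ (fun v : E => T (D (0, v))) := by
    funext v; simp [ψm]
  have hφp : ⇑φp = fun u : E => T' (D (u, 0)) := by
    funext u; simp [φp]
  rw [hψm, hφp, (Equiv.neg (E →L[ℝ] ℝ)).comp_bijective]
  -- bilinear form
  set e := (LinearMap.toContinuousLinearMap : (E →ₗ[ℝ] ℝ) ≃ₗ[ℝ] (E →L[ℝ] ℝ)) with he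
  have hes : ∀ (g : E →L[ℝ] ℝ) (x : E), e.symm g x = g x := fun g x => rfl
  set c : E →ₗ[ℝ] E →ₗ[ℝ] ℝ :=
    e.symm.toLinearMap ∘ₗ (((T.comp D).comp (ContinuousLinearMap.inr ℝ E E)) :
      E →L[ℝ] E →L[ℝ] ℝ).toLinearMap with hc
  have hcapp : ∀ v w : E, c v w = D (0, v) (w, 0) := by
    intro v w
    simp only [hc, LinearMap.comp_apply, LinearEquiv.coe_coe,
      ContinuousLinearMap.coe_coe, ContinuousLinearMap.comp_apply,
      ContinuousLinearMap.inr_apply]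
    rw [hes, hTapp]
  have h1 : (⇑(e.symm.toEquiv)) ∘ (fun v : E => T (D (0, v))) = ⇑c := by
    funext v
    rfl
  have h2 : (⇑(e.symm.toEquiv)) ∘ (fun u : E => T' (D (u, 0))) = ⇑c.flip := by
    funext u
    apply LinearMap.ext
    intro w
    show e.symm (T' (D (u, 0))) w = c.flip u w
    rw [hes, hT'app, LinearMap.flip_apply, hcapp, hsymm]
  rw [← e.symm.toEquiv.comp_bijective (fun v : E => T (D (0, v))),
    ← e.symm.toEquiv.comp_bijective (fun u : E => T' (D (u, 0))), h1, h2]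
  exact (LinearMap.flip_bijective_iff₁ (B := c)).symm
end

section
/- Let E be a finite-dimensional real normed vector space, let L̂ : E × E → ℝ and φ¹, …, φᵐ : E × E → ℝ be functions, and fix q₀, q₂ ∈ E. Suppose q₁ ∈ E satisfies the constraints φᵃ(q₀, q₁) = 0 and φᵃ(q₁, q₂) = 0 for all a = 1, …, m; suppose L̂ and each φᵃ are strictly differentiable at (q₀, q₁) and at (q₁, q₂); suppose the linear map E → ℝ^{2m} given by v ↦ ((∂₁φᵃ(q₀, q₁)(v))_{a=1..m}, (∂₀φᵃ(q₁, q₂)(v))_{a=1..m}) is surjective; and suppose q₁ is a local extremum of the discrete action q ↦ L̂(q₀, q) + L̂(q, q₂) on the constraint set {q ∈ E : φᵃ(q₀, q) = 0 and φᵃ(q, q₂) = 0 for all a}. Then there exist Lagrange multipliers λ₁, λ₂ ∈ ℝ^m such that the discrete constrained Euler–Lagrange equation holds: for every v ∈ E, ∂₁L̂(q₀, q₁)(v) + Σ_a (λ₁)_a ∂₁φᵃ(q₀, q₁)(v) + ∂₀L̂(q₁, q₂)(v) + Σ_a (λ₂)_a ∂₀φᵃ(q₁, q₂)(v) = 0.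 -/
/-- Discrete constrained Euler–Lagrange equations with Lagrange multipliers:
if `q₁` satisfies the constraints `φᵃ(q₀, q₁) = 0 = φᵃ(q₁, q₂)`, the data are
strictly differentiable at the relevant points, the combined constraint
derivative map `v ↦ ((∂₁φᵃ(q₀,q₁)v)ₐ, (∂₀φᵃ(q₁,q₂)v)ₐ)` is surjective, and
`q₁` is a local extremum of `q ↦ L̂(q₀, q) + L̂(q, q₂)` on the constraint set,
then there exist multipliers `λ₁, λ₂ ∈ ℝᵐ` with
`∂₁L̂(q₀,q₁) + Σₐ (λ₁)ₐ ∂₁φᵃ(q₀,q₁) + ∂₀L̂(q₁,q₂) + Σₐ (λ₂)ₐ ∂₀φᵃ(q₁,q₂) = 0`. -/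
theorem discrete_constrained_EL_lagrange_multipliers
    {E : Type*} [NormedAddCommGroup E] [NormedSpace ℝ E] [FiniteDimensional ℝ E]
    (m : ℕ) (Lhat : E × E → ℝ) (φ : Fin m → E × E → ℝ) (q0 q1 q2 : E)
    (hφ01 : ∀ a, φ a (q0, q1) = 0)
    (hφ12 : ∀ a, φ a (q1, q2) = 0)
    (hL01 : HasStrictFDerivAt Lhat (fderiv ℝ Lhat (q0, q1)) (q0, q1))
    (hL12 : HasStrictFDerivAt Lhat (fderiv ℝ Lhat (q1, q2)) (q1, q2))
    (hφd01 : ∀ a, HasStrictFDerivAt (φ a) (fderiv ℝ (φ a) (q0, q1)) (q0, q1))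
    (hφd12 : ∀ a, HasStrictFDerivAt (φ a) (fderiv ℝ (φ a) (q1, q2)) (q1, q2))
    (hsurj : Function.Surjective
      (fun v : E =>
        ((fun a => partial1 (φ a) q0 q1 v, fun a => partial0 (φ a) q1 q2 v) :
          (Fin m → ℝ) × (Fin m → ℝ))))
    (hext : IsLocalExtrOn (fun q : E => Lhat (q0, q) + Lhat (q, q2))
      {q : E | (∀ a, φ a (q0, q) = 0) ∧ (∀ a, φ a (q, q2) = 0)} q1) :
    ∃ lam1 lam2 : Fin m → ℝ, ∀ v : E,
      partial1 Lhat q0 q1 v + (∑ a, lam1 a * partial1 (φ a) q0 q1 v)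
        + partial0 Lhat q1 q2 v + (∑ a, lam2 a * partial0 (φ a) q1 q2 v) = 0 := by
  classical
  set f : (Fin m ⊕ Fin m) → E → ℝ := fun i q =>
    Sum.elim (fun a => φ a (q0, q)) (fun a => φ a (q, q2)) i with hf
  set f' : (Fin m ⊕ Fin m) → E →L[ℝ] ℝ := fun i =>
    Sum.elim (fun a => partial1 (φ a) q0 q1) (fun a => partial0 (φ a) q1 q2) i with hf'
  have hinr : HasStrictFDerivAt (fun q : E => (q0, q))
      (ContinuousLinearMap.inr ℝ E E) q1 :=
    HasStrictFDerivAt.prodMk (hasStrictFDerivAt_const q0 q1) (hasStrictFDerivAt_id q1)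
  have hinl : HasStrictFDerivAt (fun q : E => (q, q2))
      (ContinuousLinearMap.inl ℝ E E) q1 :=
    HasStrictFDerivAt.prodMk (hasStrictFDerivAt_id q1) (hasStrictFDerivAt_const q2 q1)
  have hfd : ∀ i, HasStrictFDerivAt (f i) (f' i) q1 := by
    rintro (a | a)
    · exact (hφd01 a).comp q1 hinr
    · exact (hφd12 a).comp q1 hinl
  have hφd : HasStrictFDerivAt (fun q : E => Lhat (q0, q) + Lhat (q, q2))
      (partial1 Lhat q0 q1 + partial0 Lhat q1 q2) q1 :=
    (hL01.comp q1 hinr).add (hL12.comp q1 hinl)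
  have hset : {q : E | (∀ a, φ a (q0, q) = 0) ∧ (∀ a, φ a (q, q2) = 0)}
      = {q : E | ∀ i, f i q = f i q1} := by
    ext q
    simp only [Set.mem_setOf_eq, hf, Sum.forall, Sum.elim_inl, Sum.elim_inr]
    constructor
    · rintro ⟨h1, h2⟩
      exact ⟨fun a => by rw [h1 a, hφ01 a], fun a => by rw [h2 a, hφ12 a]⟩
    · rintro ⟨h1, h2⟩
      exact ⟨fun a => by rw [h1 a, hφ01 a], fun a => by rw [h2 a, hφ12 a]⟩
  rw [hset] at hext
  obtain ⟨Λ, Λ₀, hne, hsum⟩ := hext.exists_multipliers_of_hasStrictFDerivAt hfd hφd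
  have key : ∀ v : E,
      (∑ a, Λ (Sum.inl a) * partial1 (φ a) q0 q1 v)
        + (∑ a, Λ (Sum.inr a) * partial0 (φ a) q1 q2 v)
        + Λ₀ * partial1 Lhat q0 q1 v + Λ₀ * partial0 Lhat q1 q2 v = 0 := by
    intro v
    have h := ContinuousLinearMap.ext_iff.1 hsum v
    simp only [ContinuousLinearMap.add_apply, ContinuousLinearMap.zero_apply,
      ContinuousLinearMap.smul_apply, ContinuousLinearMap.sum_apply,
      Fintype.sum_sum_type, hf', Sum.elim_inl, Sum.elim_inr, smul_eq_mul,
      mul_add] at h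
    linarith
  have hΛ₀ : Λ₀ ≠ 0 := by
    intro h0
    apply hne
    have hΛ : Λ = 0 := by
      funext i
      rcases i with a | a
      · obtain ⟨v, hv⟩ := hsurj (Pi.single a 1, 0)
        have hv1 : (fun b => partial1 (φ b) q0 q1 v) = Pi.single a 1 :=
          congrArg Prod.fst hv
        have hv2 : (fun b => partial0 (φ b) q1 q2 v) = (0 : Fin m → ℝ) :=
          congrArg Prod.snd hv
        have hk := key v
        simpa [h0, congrFun hv1, congrFun hv2, Pi.single_apply,
          Finset.sum_ite_eq'] using hk
      · obtain ⟨v, hv⟩ := hsurj (0, Pi.single a 1)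
        have hv1 : (fun b => partial1 (φ b) q0 q1 v) = (0 : Fin m → ℝ) :=
          congrArg Prod.fst hv
        have hv2 : (fun b => partial0 (φ b) q1 q2 v) = Pi.single a 1 :=
          congrArg Prod.snd hv
        have hk := key v
        simpa [h0, congrFun hv1, congrFun hv2, Pi.single_apply,
          Finset.sum_ite_eq'] using hk
    simp [hΛ, h0, Prod.ext_iff]
  refine ⟨fun a => Λ (Sum.inl a) / Λ₀, fun a => Λ (Sum.inr a) / Λ₀, fun v => ?_⟩
  have e1 : (∑ a, Λ (Sum.inl a) / Λ₀ * partial1 (φ a) q0 q1 v)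
      = Λ₀⁻¹ * ∑ a, Λ (Sum.inl a) * partial1 (φ a) q0 q1 v := by
    rw [Finset.mul_sum]; exact Finset.sum_congr rfl fun a _ => by ring
  have e2 : (∑ a, Λ (Sum.inr a) / Λ₀ * partial0 (φ a) q1 q2 v)
      = Λ₀⁻¹ * ∑ a, Λ (Sum.inr a) * partial0 (φ a) q1 q2 v := by
    rw [Finset.mul_sum]; exact Finset.sum_congr rfl fun a _ => by ring
  rw [e1, e2]
  have h2 : partial1 Lhat q0 q1 v
        + Λ₀⁻¹ * (∑ a, Λ (Sum.inl a) * partial1 (φ a) q0 q1 v)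
        + partial0 Lhat q1 q2 v
        + Λ₀⁻¹ * (∑ a, Λ (Sum.inr a) * partial0 (φ a) q1 q2 v)
      = Λ₀⁻¹ * ((∑ a, Λ (Sum.inl a) * partial1 (φ a) q0 q1 v)
          + (∑ a, Λ (Sum.inr a) * partial0 (φ a) q1 q2 v)
          + Λ₀ * partial1 Lhat q0 q1 v + Λ₀ * partial0 Lhat q1 q2 v) := by
    field_simp
    ring
  rw [h2, key v, mul_zero]
end
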